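/- Let (G,Π,r,i) be a multigroup in the relational (second) sense. Then: (a) r(i)=i; (b) r(r(x))=x for all x∈G; (c) (x,y,z)∈Π if and only if (r(y),r(x),r(z))∈Π; (d) (i,x,y)∈Π if and only if x=y; (e) if there exists q∈G with (v,w,q)∈Π and (u,q,x)∈Π, then there exists p∈G with (u,v,p)∈Π and (p,w,x)∈Π; (f) for all a,b∈G there exists c∈G with (a,b,c)∈Π. -/
import Mathlib


universe u

/-- A multigroup in the relational (second) sense: a quadruple `(G, Π, r, i)` where `G` is a
nonempty set, `Π ⊆ G × G × G`, `r : G → G` and `i ∈ G`, satisfying axioms I, II, III. -/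
structure Multigroup2 (G : Type u) where
  nonempty : Nonempty G
  Pi : G → G → G → Prop
  r : G → G
  i : G
  axI : ∀ {x y z}, Pi x y z → Pi z (r y) x ∧ Pi (r x) z y
  axII : ∀ {x y}, Pi x i y ↔ x = y
  axIII : ∀ {u v w x}, (∃ p, Pi u v p ∧ Pi p w x) → ∃ q, Pi v w q ∧ Pi u q x

/-- Lemma 1.2: basic properties of a multigroup in the relational sense:
(a) `r(i) = i`; (b) `r(r(x)) = x`; (c) `(x,y,z) ∈ Π ↔ (r(y),r(x),r(z)) ∈ Π`;
(d) `(i,x,y) ∈ Π ↔ x = y`; (e) the reversed associativity condition; and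
(f) for all `a, b` there is `c` with `(a,b,c) ∈ Π`. -/
theorem multigroup2_basic_properties {G : Type u} (M : Multigroup2 G) :
    (M.r M.i = M.i) ∧
    (∀ x, M.r (M.r x) = x) ∧
    (∀ x y z, M.Pi x y z ↔ M.Pi (M.r y) (M.r x) (M.r z)) ∧
    (∀ x y, M.Pi M.i x y ↔ x = y) ∧
    (∀ u v w x, (∃ q, M.Pi v w q ∧ M.Pi u q x) → ∃ p, M.Pi u v p ∧ M.Pi p w x) ∧
    (∀ a b, ∃ c, M.Pi a b c) := by

  -- basic building blocks
  have hxx : ∀ x, M.Pi x M.i x := fun x => M.axII.mpr rfl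
  have hb : ∀ x, M.r (M.r x) = x := by
    intro x
    have h1 := (M.axI (hxx x)).2          -- Pi (r x) x i
    have h2 := (M.axI h1).1
    have h3 := (M.axI h1).2               -- Pi (r (r x)) i x
    exact M.axII.mp h3
  have ha : M.r M.i = M.i := by
    have h1 := (M.axI (hxx M.i)).2        -- Pi (r i) i i
    exact M.axII.mp h1
  have hcf : ∀ x y z, M.Pi x y z → M.Pi (M.r y) (M.r x) (M.r z) := by
    intro x y z h
    have h1 := (M.axI h).1                -- Pi z (r y) x
    have h2 := (M.axI h1).2               -- Pi (r z) x (r y)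
    exact (M.axI h2).1                    -- Pi (r y) (r x) (r z)
  have hc : ∀ x y z, M.Pi x y z ↔ M.Pi (M.r y) (M.r x) (M.r z) := by
    intro x y z
    constructor
    · exact hcf x y z
    · intro h
      have := hcf _ _ _ h
      rwa [hb, hb, hb] at this
  have hixx : ∀ x, M.Pi M.i x x := by
    intro x
    have h1 := (M.axI (hxx (M.r x))).2    -- Pi (r (r x)) (r x) i
    have h2 := (M.axI h1).1               -- Pi i (r (r x)) (r (r x))
    rwa [hb] at h2
  have hd : ∀ x y, M.Pi M.i x y ↔ x = y := by
    intro x y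
    constructor
    · intro h
      have h1 := (M.axI h).1              -- Pi y (r x) i
      have h2 := (M.axI h1).2             -- Pi (r y) i (r x)
      have h3 := M.axII.mp h2             -- r y = r x
      have h4 := congrArg M.r h3
      rw [hb, hb] at h4
      exact h4.symm
    · rintro rfl; exact hixx x
  have he : ∀ u v w x, (∃ q, M.Pi v w q ∧ M.Pi u q x) → ∃ p, M.Pi u v p ∧ M.Pi p w x := by
    rintro u v w x ⟨q, h1, h2⟩
    have h1' := hcf _ _ _ h1              -- Pi (r w) (r v) (r q)
    have h2' := hcf _ _ _ h2              -- Pi (r q) (r u) (r x)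
    obtain ⟨q', h3, h4⟩ := M.axIII ⟨M.r q, h1', h2'⟩
    -- h3 : Pi (r v) (r u) q', h4 : Pi (r w) q' (r x)
    refine ⟨M.r q', ?_, ?_⟩
    · have := hcf _ _ _ h3
      rwa [hb, hb] at this
    · have := hcf _ _ _ h4
      rwa [hb, hb] at this
  refine ⟨ha, hb, hc, hd, he, ?_⟩
  intro a b
  have h1 := (M.axI (hxx a)).2            -- Pi (r a) a i
  have h2 := hixx b                        -- Pi i b b
  obtain ⟨q, hq, _⟩ := M.axIII ⟨M.i, h1, h2⟩
  exact ⟨q, hq⟩
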